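/- Let R be a field and x, y ∈ X with [x] ≠ [y] (x and y not tail equivalent). Then there is no R-linear isomorphism U : ℙ_{[x]} → ℙ_{[y]} intertwining the operators P_{Z_μ} on both spaces (i.e., satisfying U ∘ P_{Z_μ} = P_{Z_μ} ∘ U for all finite words μ). -/

import Mathlib

/-- The iterated shift: `shiftN x n = σⁿ(x)`. -/
def shiftN {A : Type*} (x : ℕ → A) (n : ℕ) : ℕ → A := fun k => x (k + n)

/-- Tail equivalence: `x ∼ y` iff `σⁿ(x) = σᵐ(y)` for some `n, m ∈ ℕ`. -/
def tailEq {A : Type*} (x y : ℕ → A) : Prop := ∃ n m : ℕ, shiftN x n = shiftN y m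

/-- Concatenation of a finite word with an infinite sequence. -/
def wcat {A : Type*} (w : List A) (x : ℕ → A) : ℕ → A :=
  fun n => if h : n < w.length then w.get ⟨n, h⟩ else x (n - w.length)

/-- The language of `X`: finite words appearing in some element of `X`. -/
def inLang {A : Type*} (X : Set (ℕ → A)) (w : List A) : Prop :=
  ∃ x ∈ X, ∃ k : ℕ, ∀ i (h : i < w.length), w.get ⟨i, h⟩ = x (k + i)

/-- The periodic infinite word `w^∞`. -/
def perInf {A : Type*} (w : List A) (h : w ≠ []) : ℕ → A :=
  fun n => w.get ⟨n % w.length, Nat.mod_lt n (List.length_pos_iff.mpr h)⟩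

/-- `q` is a line path in `X`. -/
def IsLinePath {A : Type*} (X : Set (ℕ → A)) (q : ℕ → A) : Prop :=
  q ∈ X ∧ {x | x ∈ X ∧ x 0 = q 0} = {q} ∧
    ∀ (β : List A) (hβ : β ≠ []) (k : ℕ), shiftN q k ≠ perInf β hβ


variable {A : Type*} (R : Type*) [Field R] (X : Set (ℕ → A))

open Classical

/-- Projection `P_B(δ_x) = [x ∈ B] δ_x` on the free module on `X`. -/
noncomputable def Pop (B : Set (ℕ → A)) : (↥X →₀ R) →ₗ[R] (↥X →₀ R) :=
  Finsupp.lsum R fun x => if (x : ℕ → A) ∈ B then Finsupp.lsingle x else 0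

/-- `S_a(δ_x) = [ax ∈ X] δ_{ax}`. -/
noncomputable def Sop (a : A) : (↥X →₀ R) →ₗ[R] (↥X →₀ R) :=
  Finsupp.lsum R fun x =>
    if h : wcat [a] (x : ℕ → A) ∈ X then Finsupp.lsingle (⟨wcat [a] (x : ℕ → A), h⟩ : ↥X) else 0

/-- `S_a^*(δ_x) = [x₀ = a] δ_{σ(x)}`, needing shift invariance of `X`. -/
noncomputable def SstarOp (hX : ∀ x ∈ X, shiftN x 1 ∈ X) (a : A) :
    (↥X →₀ R) →ₗ[R] (↥X →₀ R) :=
  Finsupp.lsum R fun x =>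
    if (x : ℕ → A) 0 = a then
      Finsupp.lsingle (⟨shiftN (x : ℕ → A) 1, hX x x.2⟩ : ↥X) else 0

/-- `S_α = S_{α₁} ∘ ⋯ ∘ S_{αₙ}`. -/
noncomputable def SwordOp (β : List A) : (↥X →₀ R) →ₗ[R] (↥X →₀ R) :=
  (β.map (Sop R X)).foldr (· ∘ₗ ·) LinearMap.id

/-- `S_α^* = S_{αₙ}^* ∘ ⋯ ∘ S_{α₁}^*`. -/
noncomputable def SstarWordOp (hX : ∀ x ∈ X, shiftN x 1 ∈ X) (α : List A) :
    (↥X →₀ R) →ₗ[R] (↥X →₀ R) :=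
  (α.map (SstarOp R X hX)).foldl (fun acc f => f ∘ₗ acc) LinearMap.id

/-- `C(α,β) = {βx ∈ X : αx ∈ X}`. -/
def Cset (α β : List A) : Set (ℕ → A) :=
  {y | ∃ x : ℕ → A, y = wcat β x ∧ wcat β x ∈ X ∧ wcat α x ∈ X}

/-- The cylinder `Z_μ`. -/
def Zcyl (μ : List A) : Set (ℕ → A) := {y | y ∈ X ∧ ∃ x : ℕ → A, y = wcat μ x}

/-- `ℙ_{[x]}`: the submodule spanned by `{δ_y : y ∼ x}`. -/
noncomputable def Pclass (x : ℕ → A) : Submodule R (↥X →₀ R) :=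
  Submodule.span R {f | ∃ y : ↥X, tailEq (y : ℕ → A) x ∧ f = Finsupp.single y (1 : R)}



lemma mem_Pclass_support {A : Type*} (R : Type*) [Field R] (X : Set (ℕ → A)) (y : ℕ → A)
    (f : ↥X →₀ R) (hf : f ∈ Pclass R X y) :
    ∀ w ∈ f.support, tailEq (w : ℕ → A) y := by
  classical
  refine Submodule.span_induction ?_ ?_ ?_ ?_ hf
  · rintro f ⟨z, hz, rfl⟩ w hw
    rw [Finsupp.mem_support_iff] at hw
    rcases eq_or_ne w z with rfl | h
    · exact hz
    · simp [Finsupp.single_eq_of_ne' (Ne.symm h)] at hw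
  · simp
  · intro f g _ _ hf hg w hw
    rcases Finset.mem_union.mp (Finsupp.support_add hw) with h | h
    · exact hf w h
    · exact hg w h
  · intro c f _ hf w hw
    exact hf w (Finsupp.support_smul hw)

/-- if `x` and `y` are not tail equivalent, there is no linear
isomorphism `ℙ_{[x]} ≃ ℙ_{[y]}` intertwining the cylinder projections. -/
theorem no_equivalence_of_not_tailEq {A : Type*} (R : Type*) [Field R]
    (X : Set (ℕ → A)) (x y : ℕ → A) (hx : x ∈ X) (hy : y ∈ X)
    (hxy : ¬ tailEq x y) :
    ¬ ∃ U : ↥(Pclass R X x) ≃ₗ[R] ↥(Pclass R X y),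
        ∀ (μ : List A) (v w : ↥(Pclass R X x)),
          (v : ↥X →₀ R) = Pop R X (Zcyl X μ) (w : ↥X →₀ R) →
          ((U v : ↥(Pclass R X y)) : ↥X →₀ R)
            = Pop R X (Zcyl X μ) ((U w : ↥(Pclass R X y)) : ↥X →₀ R) := by
  classical
  rintro ⟨U, hU⟩
  have hx0 : tailEq x x := ⟨0, 0, rfl⟩
  have hdxmem : (Finsupp.single (⟨x, hx⟩ : ↥X) (1 : R)) ∈ Pclass R X x :=
    Submodule.subset_span ⟨⟨x, hx⟩, hx0, rfl⟩
  set v : ↥(Pclass R X x) := ⟨Finsupp.single ⟨x, hx⟩ 1, hdxmem⟩ with hv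
  set g : ↥X →₀ R := ((U v : ↥(Pclass R X y)) : ↥X →₀ R) with hg
  have hsupp : ∀ w ∈ g.support, tailEq (w : ℕ → A) y :=
    mem_Pclass_support R X y g (U v).2
  have hdiff : ∀ w ∈ g.support, ∃ n, (w : ℕ → A) n ≠ x n := by
    intro w hw
    by_contra h
    push_neg at h
    have hwx : (w : ℕ → A) = x := funext h
    exact hxy (hwx ▸ hsupp w hw)
  let nf : ↥X → ℕ := fun w => if h : ∃ n, (w : ℕ → A) n ≠ x n then Nat.find h else 0
  set k : ℕ := g.support.sup nf + 1 with hk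
  set μ : List A := (List.range k).map x with hμ
  have hlen : μ.length = k := by simp [hμ]
  have hμget : ∀ (n : ℕ) (h : n < μ.length), μ.get ⟨n, h⟩ = x n := by
    intro n h
    simp [hμ]
  have hwcat : ∀ z : ℕ → A, (∀ n < k, z n = x n) → z = wcat μ (shiftN z k) := by
    intro z hz
    funext n
    by_cases h : n < μ.length
    · rw [wcat]
      rw [dif_pos h, hμget n h]
      exact hz n (hlen ▸ h)
    · rw [wcat, dif_neg h, shiftN, hlen]
      congr 1
      omega
  have hxZ : x ∈ Zcyl X μ := ⟨hx, shiftN x k, hwcat x (fun _ _ => rfl)⟩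
  have hvP : (v : ↥X →₀ R) = Pop R X (Zcyl X μ) (v : ↥X →₀ R) := by
    rw [hv]
    simp only [Pop, Finsupp.lsum_single]
    rw [if_pos hxZ]
    rfl
  have hgP : g = Pop R X (Zcyl X μ) g := hU μ v v hvP
  have hg0 : Pop R X (Zcyl X μ) g = 0 := by
    rw [Pop, Finsupp.lsum_apply]
    rw [Finsupp.sum]
    apply Finset.sum_eq_zero
    intro w hw
    have hwZ : (w : ℕ → A) ∉ Zcyl X μ := by
      rintro ⟨_, x', hx'⟩
      have hn : nf w < k := by
        have := Finset.le_sup (f := nf) hw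
        omega
      have hne : (w : ℕ → A) (nf w) ≠ x (nf w) := by
        simp only [nf, dif_pos (hdiff w hw)]
        exact Nat.find_spec (hdiff w hw)
      apply hne
      have h1 : (w : ℕ → A) (nf w) = μ.get ⟨nf w, hlen ▸ hn⟩ := by
        rw [hx', wcat, dif_pos (hlen ▸ hn)]
      rw [h1, hμget]
    rw [if_neg hwZ]
    rfl
  have hUv0 : U v = 0 := by
    apply Subtype.ext
    rw [← hg, hgP, hg0]
    rfl
  have hv0 : v = 0 := by
    exact U.injective (by rw [hUv0]; exact (map_zero U).symm)
  have : (Finsupp.single (⟨x, hx⟩ : ↥X) (1 : R)) = 0 := congrArg Subtype.val hv0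
  exact one_ne_zero (Finsupp.single_eq_zero.mp this)
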